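/- Let T be a recurrent bounded linear operator on a complex Hilbert space H. Then every eigenvalue of the adjoint operator T* has modulus 1, i.e., the point spectrum of T* is contained in the unit circle. -/

import Mathlib

open Filter Topology

def Recurrent {X : Type*} [TopologicalSpace X] (T : X → X) : Prop :=
  ∀ U : Set X, IsOpen U → U.Nonempty → ∃ n : ℕ, 0 < n ∧ ((T^[n]) '' U ∩ U).Nonempty

/-- Every eigenvalue of the adjoint of a recurrent operator has modulus 1. -/
theorem stmt13 {H : Type*} [NormedAddCommGroup H] [InnerProductSpace ℂ H]
    [CompleteSpace H] (T : H →L[ℂ] H) (hrec : Recurrent (⇑T))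
    (μ : ℂ) (g : H) (hg : g ≠ 0) (heig : ContinuousLinearMap.adjoint T g = μ • g) :
    ‖μ‖ = 1 := by
  set c := ‖μ‖ with hcdef
  by_contra hc
  have hkey : ∀ (x : H) (n : ℕ),
      ‖(inner ℂ g (T^[n] x) : ℂ)‖ = c ^ n * ‖(inner ℂ g x : ℂ)‖ := by
    intro x n
    induction n generalizing x with
    | zero => simp
    | succ n ih =>
      rw [Function.iterate_succ_apply, ih (T x)]
      have h1 : (inner ℂ g (T x) : ℂ) = (starRingEnd ℂ) μ * inner ℂ g x := by
        rw [← ContinuousLinearMap.adjoint_inner_left, heig, inner_smul_left]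
      rw [h1, norm_mul, RCLike.norm_conj]
      ring
  have hgpos : (0:ℝ) < ‖g‖ := norm_pos_iff.2 hg
  have hg2 : (0:ℝ) < ‖g‖ ^ 2 := by positivity
  obtain ⟨a, b, ha, hab, hcon⟩ : ∃ a b : ℝ, 0 ≤ a ∧ a < b ∧ ∀ n : ℕ, 0 < n →
      ∀ u v : ℝ, a < u → u < b → a < v → v < b → v = c ^ n * u → False := by
    rcases lt_or_gt_of_ne hc with h1 | h1
    · refine ⟨c, 1, norm_nonneg _, h1, ?_⟩
      intro n hn u v hau hub hav hvb hv
      have hcn : c ^ n ≤ c := pow_le_of_le_one (norm_nonneg _) h1.le hn.ne'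
      have hpn : (0:ℝ) ≤ c ^ n := pow_nonneg (norm_nonneg _) n
      nlinarith
    · refine ⟨1, c, zero_le_one, h1, ?_⟩
      intro n hn u v hau hub hav hvb hv
      have hcn : c ≤ c ^ n := le_self_pow₀ h1.le hn.ne'
      have hpn : (0:ℝ) < c ^ n := pow_pos (lt_trans zero_lt_one h1) n
      nlinarith
  set U : Set H := {x | a < ‖(inner ℂ g x : ℂ)‖ ∧ ‖(inner ℂ g x : ℂ)‖ < b} with hU
  have hopen : IsOpen U := by
    have hcont : Continuous fun x : H => ‖(inner ℂ g x : ℂ)‖ :=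
      (continuous_const.inner continuous_id).norm
    have : U = (fun x : H => ‖(inner ℂ g x : ℂ)‖) ⁻¹' (Set.Ioo a b) := rfl
    rw [this]
    exact isOpen_Ioo.preimage hcont
  have hne : U.Nonempty := by
    refine ⟨(((a + b) / (2 * ‖g‖ ^ 2) : ℝ) : ℂ) • g, ?_⟩
    have hcalc : ‖(inner ℂ g ((((a + b) / (2 * ‖g‖ ^ 2) : ℝ) : ℂ) • g) : ℂ)‖
        = (a + b) / 2 := by
      rw [inner_smul_right]
      have h2 : (inner ℂ g g : ℂ) = ((‖g‖ ^ 2 : ℝ) : ℂ) := by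
        rw [inner_self_eq_norm_sq_to_K]; norm_cast
      have hnn : (0:ℝ) ≤ (a + b) / (2 * ‖g‖ ^ 2) * ‖g‖ ^ 2 :=
        mul_nonneg (div_nonneg (by linarith) (by positivity)) (sq_nonneg _)
      rw [h2, ← Complex.ofReal_mul, Complex.norm_real, Real.norm_eq_abs,
        abs_of_nonneg hnn]
      field_simp
    constructor <;> rw [hcalc] <;> linarith
  obtain ⟨n, hn, y, ⟨x, hxU, hyx⟩, hyU⟩ := hrec U hopen hne
  exact hcon n hn _ _ hxU.1 hxU.2 (hyx ▸ hyU.1) (hyx ▸ hyU.2) (hyx ▸ hkey x n)
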